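/- Let F be a free group and N a finitely generated normal subgroup of F. Then either N is trivial or N has finite index in F. -/

import Mathlib

set_option linter.unusedSectionVars false

namespace FgNormalFree

open FreeGroup

variable {α : Type*} [DecidableEq α]

lemma prefix_reduce (l p : List (α × Bool)) (hp : p <+: FreeGroup.reduce l) :
    ∃ n, FreeGroup.mk p = FreeGroup.mk (l.take n) := by
  induction l generalizing p with
  | nil =>
    exact ⟨0, by simpa using congrArg FreeGroup.mk (List.prefix_nil.mp (by simpa using hp))⟩
  | cons x l ih =>
    have hml : FreeGroup.mk l = FreeGroup.mk (reduce l) := (reduce.self).symm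
    rw [reduce.cons] at hp
    rcases hred : reduce l with _ | ⟨y, t⟩
    · rw [hred] at hp
      simp only at hp
      rcases List.prefix_cons_iff.mp hp with h | ⟨p', hp', hpre⟩
      · exact ⟨0, by simp [h]⟩
      · refine ⟨l.length + 1, ?_⟩
        rw [List.prefix_nil.mp hpre] at hp'
        rw [hp', List.take_of_length_le (by simp)]
        have : FreeGroup.mk l = 1 := by rw [hml, hred]; rfl
        calc FreeGroup.mk [x] = FreeGroup.mk [x] * FreeGroup.mk l := by rw [this, mul_one]
        _ = FreeGroup.mk (x :: l) := by rw [FreeGroup.mul_mk]; rfl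
    · rw [hred] at hp
      simp only at hp
      split_ifs at hp with hc
      · have hyp : (y :: p) <+: reduce l := by rw [hred]; exact List.cons_prefix_cons.mpr ⟨rfl, hp⟩
        obtain ⟨n, hn⟩ := ih _ hyp
        refine ⟨n + 1, ?_⟩
        have hxy : FreeGroup.mk [x] * FreeGroup.mk [y] = 1 := by
          have : x = (y.1, !y.2) := Prod.ext hc.1 hc.2
          rw [this, FreeGroup.mul_mk]
          exact (FreeGroup.reduce.exact (by simp [reduce]))
        have h1 : FreeGroup.mk p = FreeGroup.mk [x] * FreeGroup.mk (y :: p) := by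
          have : FreeGroup.mk (y :: p) = FreeGroup.mk [y] * FreeGroup.mk p := by
            rw [FreeGroup.mul_mk]; rfl
          rw [this, ← mul_assoc, hxy, one_mul]
        rw [h1, hn, List.take_succ_cons, FreeGroup.mul_mk]; rfl
      · rcases List.prefix_cons_iff.mp hp with h | ⟨p', hp', hpre⟩
        · exact ⟨0, by simp [h]⟩
        · obtain ⟨n, hn⟩ := ih p' (by rw [hred]; exact hpre)
          refine ⟨n + 1, ?_⟩
          rw [hp', List.take_succ_cons, show (x :: p') = [x] ++ p' from rfl,
            show x :: List.take n l = [x] ++ List.take n l from rfl,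
            ← FreeGroup.mul_mk, ← FreeGroup.mul_mk, hn]

lemma prod_eq_mk_flatMap (L : List (FreeGroup α)) :
    L.prod = FreeGroup.mk (L.flatMap FreeGroup.toWord) := by
  induction L with
  | nil => simp [FreeGroup.one_eq_mk]
  | cons s L ih => rw [List.prod_cons, ih, List.flatMap_cons, ← FreeGroup.mul_mk, FreeGroup.mk_toWord]

lemma take_flatMap_decomp (L : List (FreeGroup α)) (n : ℕ) :
    ∃ j r, FreeGroup.mk ((L.flatMap FreeGroup.toWord).take n) = (L.take j).prod * FreeGroup.mk r ∧
      (r = [] ∨ ∃ s ∈ L, r <+: s.toWord) := by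
  induction L generalizing n with
  | nil => exact ⟨0, [], by simp, Or.inl rfl⟩
  | cons s L ih =>
    rw [List.flatMap_cons, List.take_append]
    by_cases hn : n ≤ s.toWord.length
    · refine ⟨0, s.toWord.take n, ?_, Or.inr ⟨s, by simp, List.take_prefix _ _⟩⟩
      have : n - s.toWord.length = 0 := by omega
      simp [this]
    · obtain ⟨j, r, h1, h2⟩ := ih (n - s.toWord.length)
      refine ⟨j + 1, r, ?_, ?_⟩
      · rw [List.take_of_length_le (by omega), ← FreeGroup.mul_mk, FreeGroup.mk_toWord, h1,
          List.take_succ_cons, List.prod_cons, mul_assoc]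
      · rcases h2 with h | ⟨s', hs', hr⟩
        · exact Or.inl h
        · exact Or.inr ⟨s', List.mem_cons_of_mem _ hs', hr⟩

def NoCancel (a b : α × Bool) : Prop := ¬(a.1 = b.1 ∧ a.2 = !b.2)

lemma reduce_eq_self_of_chain' : ∀ {l : List (α × Bool)}, List.Chain' NoCancel l → reduce l = l := by
  intro l h
  induction l with
  | nil => rfl
  | cons x l ih =>
    rcases l with _ | ⟨y, t⟩
    · rfl
    · have h2 := ih h.tail
      rw [reduce.cons, h2]
      simp only
      rw [if_neg (List.isChain_cons_cons.mp h).1]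

lemma chain'_of_reduce_eq_self : ∀ {l : List (α × Bool)}, reduce l = l → List.Chain' NoCancel l := by
  intro l
  induction l with
  | nil => exact fun _ => List.isChain_nil
  | cons x l ih =>
    intro h
    rw [reduce.cons] at h
    rcases hred : reduce l with _ | ⟨y, t⟩
    · rw [hred] at h
      simp only at h
      have hl : l = [] := by
        have h1 := congrArg List.length h
        simp only [List.length_cons, List.length_singleton, List.length_nil] at h1
        exact List.length_eq_zero_iff.mp (by omega)
      subst hl; exact List.IsChain.singleton _
    · rw [hred] at h
      simp only at h
      split_ifs at h with hc
      · have h1 := congrArg List.length h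
        have h2 : (reduce l).length ≤ l.length := (FreeGroup.reduce.red (L := l)).sublist.length_le
        rw [hred] at h2
        simp at h1 h2
        omega
      · have hl : l = y :: t := by
          have := (List.cons.injEq x _ x l).mp h
          exact this.2.symm
        subst hl
        exact List.isChain_cons_cons.mpr ⟨hc, ih hred⟩

lemma chain'_toWord (w : FreeGroup α) : List.Chain' NoCancel w.toWord :=
  chain'_of_reduce_eq_self (FreeGroup.reduce_toWord w)

lemma head?_invRev (l : List (α × Bool)) :
    (FreeGroup.invRev l).head? = l.getLast?.map (fun x => (x.1, !x.2)) := by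
  rw [FreeGroup.invRev, List.head?_reverse, List.getLast?_map]

lemma conj_toWord (g u : FreeGroup α) (hne : u.toWord ≠ [])
    (hfront : ∀ x ∈ g.toWord.getLast?, ∀ y ∈ u.toWord.head?, NoCancel x y)
    (hback : ∀ y ∈ u.toWord.getLast?, ∀ x ∈ g.toWord.getLast?, NoCancel y (x.1, !x.2)) :
    (g * u * g⁻¹).toWord = g.toWord ++ u.toWord ++ (g⁻¹).toWord := by
  have key : g * u * g⁻¹ = FreeGroup.mk (g.toWord ++ u.toWord ++ FreeGroup.invRev g.toWord) := by
    rw [← FreeGroup.mul_mk, ← FreeGroup.mul_mk]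
    rw [show FreeGroup.mk (FreeGroup.invRev g.toWord) = g⁻¹ by
      rw [← FreeGroup.inv_mk, FreeGroup.mk_toWord]]
    rw [FreeGroup.mk_toWord, FreeGroup.mk_toWord]
  have hchain : List.Chain' NoCancel (g.toWord ++ u.toWord ++ FreeGroup.invRev g.toWord) := by
    rw [show List.Chain' NoCancel (g.toWord ++ u.toWord ++ FreeGroup.invRev g.toWord) =
      List.IsChain NoCancel _ from rfl, List.isChain_append, List.isChain_append]
    refine ⟨⟨chain'_toWord g, chain'_toWord u, hfront⟩, ?_, ?_⟩
    · rw [← FreeGroup.toWord_inv]; exact chain'_toWord g⁻¹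
    · intro y hy z hz
      rw [List.getLast?_append_of_ne_nil _ hne] at hy
      rw [head?_invRev, Option.mem_def, Option.map_eq_some_iff] at hz
      obtain ⟨x, hx, rfl⟩ := hz
      exact hback y hy x hx
  rw [key, FreeGroup.toWord_mk, reduce_eq_self_of_chain' hchain, FreeGroup.toWord_inv]

lemma mem_invRev {a : α} {b : Bool} {l : List (α × Bool)} :
    (a, b) ∈ FreeGroup.invRev l ↔ (a, !b) ∈ l := by
  simp only [FreeGroup.invRev, List.mem_reverse, List.mem_map]
  constructor
  · rintro ⟨⟨a', b'⟩, h, he⟩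
    obtain ⟨rfl, rfl⟩ : a' = a ∧ b' = !b := by
      have h1 : a' = a := congrArg Prod.fst he
      have h2 : (!b') = b := congrArg Prod.snd he
      exact ⟨h1, by rw [← h2, Bool.not_not]⟩
    exact h
  · intro h
    exact ⟨(a, !b), h, by simp⟩

/-- the subgroup of elements avoiding the letter `a` -/
def avoidLetter (a : α) : Subgroup (FreeGroup α) where
  carrier := {g | ∀ b, (a, b) ∉ g.toWord}
  one_mem' := by simp [FreeGroup.toWord_one]
  mul_mem' := by
    intro g h hg hh b hb
    rcases List.mem_append.mp ((FreeGroup.toWord_mul_sublist g h).subset hb) with h' | h'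
    · exact hg b h'
    · exact hh b h'
  inv_mem' := by
    intro g hg b hb
    rw [FreeGroup.toWord_inv] at hb
    exact hg (!b) (mem_invRev.mp hb)

lemma mem_avoidLetter (a : α) (g : FreeGroup α) :
    g ∈ avoidLetter a ↔ ∀ b, (a, b) ∉ g.toWord := Iff.rfl

lemma conj_single_toWord (z : α × Bool) (u : FreeGroup α) (hne : u.toWord ≠ [])
    (hfront : ∀ y ∈ u.toWord.head?, NoCancel z y)
    (hback : ∀ y ∈ u.toWord.getLast?, y ≠ z) :
    (FreeGroup.mk [z] * u * (FreeGroup.mk [z])⁻¹).toWord = z :: u.toWord ++ [(z.1, !z.2)] := by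
  have hzw : (FreeGroup.mk [z]).toWord = [z] := FreeGroup.toWord_mk
  have := conj_toWord (FreeGroup.mk [z]) u hne ?_ ?_
  · rw [this, hzw, FreeGroup.toWord_inv, hzw]
    simp [FreeGroup.invRev]
  · rw [hzw]
    intro x hx y hy
    obtain rfl : x = z := by simpa using hx.symm
    exact hfront y hy
  · rw [hzw]
    intro y hy x hx
    obtain rfl : x = z := by simpa using hx.symm
    intro ⟨h1, h2⟩
    exact hback y hy (Prod.ext h1 (by simpa using h2))

lemma letters_finite {N : Subgroup (FreeGroup α)} [hN : N.Normal] (S : Finset (FreeGroup α))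
    (hS : Subgroup.closure (S : Set (FreeGroup α)) = N) (hbot : N ≠ ⊥) : Finite α := by
  have happ : ∀ a : α, ∃ s ∈ S, ∃ b, (a, b) ∈ s.toWord := by
    intro a
    by_contra hcon
    push_neg at hcon
    have hle : N ≤ avoidLetter a := by
      rw [← hS]
      refine (Subgroup.closure_le _).mpr ?_
      intro s hs
      rw [SetLike.mem_coe, mem_avoidLetter]
      intro b hb
      exact hcon s hs b hb
    obtain ⟨⟨u0, hu0N⟩, hu0⟩ := (Subgroup.ne_bot_iff_exists_ne_one).mp hbot
    have hune : u0 ≠ 1 := by simpa [Subtype.ext_iff] using hu0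
    have hcne : u0.toWord ≠ [] := fun h => hune (FreeGroup.toWord_eq_nil_iff.mp h)
    have hv : FreeGroup.mk [(a, true)] * u0 * (FreeGroup.mk [(a, true)])⁻¹ ∈ N :=
      hN.conj_mem u0 hu0N _
    have hvw := conj_single_toWord (a, true) u0 hcne ?_ ?_
    · have := hle hv
      rw [mem_avoidLetter] at this
      exact this true (by rw [hvw]; simp)
    · intro y hy ⟨h1, _⟩
      have hmem : y ∈ u0.toWord := List.mem_of_mem_head? hy
      have hu0avoid := (mem_avoidLetter a u0).mp (hle hu0N)
      exact hu0avoid y.2 (by rwa [show (a, y.2) = y from Prod.ext h1 rfl])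
    · intro y hy hyz
      have hmem : y ∈ u0.toWord := List.mem_of_mem_getLast? hy
      have hu0avoid := (mem_avoidLetter a u0).mp (hle hu0N)
      exact hu0avoid true (by rwa [show (a, true) = y from hyz.symm])
  have hfin : (Set.univ : Set α).Finite := by
    apply Set.Finite.subset
      (S.finite_toSet.biUnion (fun s _ => (s.toWord.map Prod.fst).finite_toSet))
    intro a _
    obtain ⟨s, hs, b, hb⟩ := happ a
    exact Set.mem_biUnion hs (List.mem_map.mpr ⟨(a, b), hb, rfl⟩)
  exact Set.finite_univ_iff.mp hfin

lemma exists_letter [Nontrivial α] (v1 v2 v3 : α × Bool) :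
    ∃ z : α × Bool, z ≠ v1 ∧ z ≠ v2 ∧ z ≠ v3 := by
  by_contra hcon
  push_neg at hcon
  obtain ⟨x, y, hxy⟩ := exists_pair_ne α
  have hsub : ({(x, true), (x, false), (y, true), (y, false)} : Finset (α × Bool)) ⊆
      {v1, v2, v3} := by
    intro z _
    simp only [Finset.mem_insert, Finset.mem_singleton]
    have := hcon z
    tauto
  have h4 : ({(x, true), (x, false), (y, true), (y, false)} : Finset (α × Bool)).card = 4 := by
    rw [Finset.card_insert_of_notMem (by simp [hxy]), Finset.card_insert_of_notMem (by simp [hxy]),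
      Finset.card_insert_of_notMem (by simp), Finset.card_singleton]
  have h3 : ({v1, v2, v3} : Finset (α × Bool)).card ≤ 3 :=
    (Finset.card_insert_le _ _).trans (by have := Finset.card_insert_le v2 {v3}; simp at this; omega)
  have := Finset.card_le_card hsub
  omega

lemma noCancel_of_ne {a b : α × Bool} (h : b ≠ (a.1, !a.2)) : NoCancel a b := by
  rintro ⟨h1, h2⟩
  apply h
  refine Prod.ext h1.symm ?_
  simp only
  rw [h2, Bool.not_not]

/-- every element of the free group is a prefix of (the word of) some element of a
nontrivial normal subgroup -/
lemma exists_prefix_mem [Nontrivial α] {N : Subgroup (FreeGroup α)} [hN : N.Normal]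
    {u0 : FreeGroup α} (hu0N : u0 ∈ N) (hu0 : u0 ≠ 1) (g : FreeGroup α) :
    ∃ w ∈ N, g.toWord <+: w.toWord := by
  by_cases hgne : g.toWord = []
  · exact ⟨1, N.one_mem, by simp [hgne]⟩
  have hcne : u0.toWord ≠ [] := fun h => hu0 (FreeGroup.toWord_eq_nil_iff.mp h)
  set x := g.toWord.getLast hgne with hx
  set y1 := u0.toWord.head hcne with hy1
  set y2 := u0.toWord.getLast hcne with hy2
  obtain ⟨z, hz1, hz2, hz3⟩ := exists_letter (x.1, !x.2) (y1.1, !y1.2) y2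
  set u := FreeGroup.mk [z] * u0 * (FreeGroup.mk [z])⁻¹ with hu
  have huN : u ∈ N := hN.conj_mem u0 hu0N _
  have huw : u.toWord = z :: u0.toWord ++ [(z.1, !z.2)] := by
    apply conj_single_toWord z u0 hcne
    · intro y hy
      obtain rfl : y = y1 := by
        rw [List.head?_eq_head hcne] at hy; simpa using hy.symm
      apply noCancel_of_ne
      intro h
      apply hz2
      rw [h]
      simp
    · intro y hy
      obtain rfl : y = y2 := by
        rw [List.getLast?_eq_getLast hcne] at hy; simpa using hy.symm
      exact Ne.symm hz3
  have hune : u.toWord ≠ [] := by rw [huw]; simp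
  refine ⟨g * u * g⁻¹, hN.conj_mem u huN g, ?_⟩
  rw [conj_toWord g u hune ?_ ?_]
  · exact (List.prefix_append g.toWord u.toWord).trans
      (List.prefix_append (g.toWord ++ u.toWord) (g⁻¹.toWord))
  · intro x' hx' y hy
    obtain rfl : x' = x := by
      rw [List.getLast?_eq_getLast hgne] at hx'; simpa using hx'.symm
    obtain rfl : y = z := by
      rw [huw] at hy; simpa using hy.symm
    exact noCancel_of_ne hz1
  · intro y hy x' hx'
    obtain rfl : x' = x := by
      rw [List.getLast?_eq_getLast hgne] at hx'; simpa using hx'.symm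
    obtain rfl : y = (z.1, !z.2) := by
      rw [huw] at hy
      rw [show (z :: u0.toWord ++ [(z.1, !z.2)]).getLast? = some (z.1, !z.2) by
        rw [List.getLast?_append_of_ne_nil _ (by simp)]; rfl] at hy
      simpa using hy.symm
    apply noCancel_of_ne
    rw [show (((z.1, !z.2).1 : α), !(z.1, !z.2).2) = z by simp]
    exact Ne.symm hz1

lemma finiteIndex_rank_one (a : α) (hall : ∀ b : α, b = a) {N : Subgroup (FreeGroup α)} [N.Normal]
    {u0 : FreeGroup α} (hu0N : u0 ∈ N) (hu0 : u0 ≠ 1) : N.FiniteIndex := by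
  have hpow : ∀ g : FreeGroup α, ∃ k : ℤ, g = FreeGroup.of a ^ k := by
    intro g
    induction g using FreeGroup.induction_on with
    | C1 => exact ⟨0, by simp⟩
    | of x => exact ⟨1, by rw [hall x]; simp⟩
    | inv_of x ih => obtain ⟨k, hk⟩ := ih; exact ⟨-k, by rw [hk, zpow_neg]⟩
    | mul x y ihx ihy =>
      obtain ⟨k, hk⟩ := ihx; obtain ⟨m, hm⟩ := ihy
      exact ⟨k + m, by rw [hk, hm, zpow_add]⟩
  obtain ⟨k, hk⟩ := hpow u0
  have hk0 : k ≠ 0 := by rintro rfl; exact hu0 (by simp [hk])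
  set n : ℕ := k.natAbs with hn
  have hnpos : 0 < (n : ℤ) := by
    have := Int.natAbs_pos.mpr hk0
    exact_mod_cast this
  have hbase : FreeGroup.of a ^ (n : ℤ) ∈ N := by
    rcases Int.natAbs_eq k with h | h
    · rw [← h]; exact hk ▸ hu0N
    · have : FreeGroup.of a ^ (n : ℤ) = u0⁻¹ := by
        rw [hk, ← zpow_neg]
        congr 1
        omega
      rw [this]; exact N.inv_mem hu0N
  have : Finite (FreeGroup α ⧸ N) := by
    apply Finite.of_surjective
      (fun m : Fin n => (QuotientGroup.mk (FreeGroup.of a ^ (m : ℤ)) : FreeGroup α ⧸ N))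
    intro q
    induction q using QuotientGroup.induction_on with
    | H g =>
      obtain ⟨m, hm⟩ := hpow g
      have h1 : (0 : ℤ) ≤ m % n := Int.emod_nonneg m (by omega)
      have h2 : m % n < n := Int.emod_lt_of_pos m hnpos
      refine ⟨⟨(m % n).toNat, by omega⟩, ?_⟩
      have hrw : g = FreeGroup.of a ^ ((n : ℤ) * (m / n)) * FreeGroup.of a ^ (m % n) := by
        rw [hm, ← zpow_add]; congr 1; exact (Int.mul_ediv_add_emod m n).symm
      beta_reduce
      rw [show (((⟨(m % ↑n).toNat, by omega⟩ : Fin n) : ℕ) : ℤ) = m % n by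
        simp [Int.toNat_of_nonneg h1]]
      rw [hrw, QuotientGroup.mk_mul]
      have hmem : FreeGroup.of a ^ ((n : ℤ) * (m / n)) ∈ N := by
        rw [zpow_mul]; exact N.zpow_mem hbase _
      rw [(QuotientGroup.eq_one_iff _).mpr hmem, one_mul]
  exact N.finiteIndex_of_finite_quotient

lemma finiteIndex_of_nontrivial [Finite α] [Nontrivial α] {N : Subgroup (FreeGroup α)}
    [hN : N.Normal] (S : Finset (FreeGroup α))
    (hS : Subgroup.closure (S : Set (FreeGroup α)) = N) (hbot : N ≠ ⊥) : N.FiniteIndex := by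
  obtain ⟨⟨u0, hu0N⟩, hu0⟩ := (Subgroup.ne_bot_iff_exists_ne_one).mp hbot
  have hune : u0 ≠ 1 := by simpa [Subtype.ext_iff] using hu0
  set L := S.sup (fun s => s.toWord.length) with hL
  have key : ∀ g : FreeGroup α, ∃ r : List (α × Bool), r.length ≤ L ∧
      (QuotientGroup.mk g : FreeGroup α ⧸ N) = QuotientGroup.mk (FreeGroup.mk r) := by
    intro g
    obtain ⟨w, hwN, hpre⟩ := exists_prefix_mem hu0N hune g
    have hw' : w ∈ Submonoid.closure ((S : Set (FreeGroup α)) ∪ (S : Set (FreeGroup α))⁻¹) := by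
      rw [← Subgroup.closure_toSubmonoid]
      exact (show w ∈ Subgroup.closure (S : Set (FreeGroup α)) from hS ▸ hwN)
    obtain ⟨l, hl, hlprod⟩ := Submonoid.exists_list_of_mem_closure hw'
    have hlmem : ∀ y ∈ l, y ∈ N := by
      intro y hy
      rcases hl y hy with h | h
      · exact hS ▸ Subgroup.subset_closure h
      · rw [Set.mem_inv] at h
        have : y⁻¹ ∈ N := hS ▸ Subgroup.subset_closure h
        simpa using N.inv_mem this
    have hlen : ∀ y ∈ l, y.toWord.length ≤ L := by
      intro y hy
      rcases hl y hy with h | h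
      · exact Finset.le_sup (f := fun s => s.toWord.length) h
      · rw [Set.mem_inv] at h
        have h1 : y⁻¹.toWord.length ≤ L := Finset.le_sup (f := fun s => s.toWord.length) h
        rwa [FreeGroup.toWord_inv, FreeGroup.invRev_length] at h1
    have hw : w = FreeGroup.mk (l.flatMap FreeGroup.toWord) := by
      rw [← prod_eq_mk_flatMap, hlprod]
    have hpre' : g.toWord <+: FreeGroup.reduce (l.flatMap FreeGroup.toWord) := by
      rw [← FreeGroup.toWord_mk, ← hw]; exact hpre
    obtain ⟨n, hn⟩ := prefix_reduce _ _ hpre'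
    obtain ⟨j, r, hjr, hr⟩ := take_flatMap_decomp l n
    refine ⟨r, ?_, ?_⟩
    · rcases hr with h | ⟨s, hs, hrs⟩
      · simp [h]
      · exact (hrs.length_le).trans (hlen s hs)
    · have hgeq : g = (l.take j).prod * FreeGroup.mk r := by
        conv_lhs => rw [← FreeGroup.mk_toWord (x := g)]
        rw [hn, hjr]
      have hmem : (l.take j).prod ∈ N :=
        list_prod_mem (fun y hy => hlmem y ((List.take_subset j l) hy))
      rw [hgeq, QuotientGroup.mk_mul, (QuotientGroup.eq_one_iff _).mpr hmem, one_mul]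
  have : Finite (FreeGroup α ⧸ N) := by
    have hfin : {r : List (α × Bool) | r.length ≤ L}.Finite := List.finite_length_le _ L
    have := hfin.to_subtype
    apply Finite.of_surjective
      (fun r : {r : List (α × Bool) | r.length ≤ L} =>
        (QuotientGroup.mk (FreeGroup.mk r.1) : FreeGroup α ⧸ N))
    intro q
    induction q using QuotientGroup.induction_on with
    | H g =>
      obtain ⟨r, h1, h2⟩ := key g
      exact ⟨⟨r, h1⟩, h2.symm⟩
  exact N.finiteIndex_of_finite_quotient


theorem free_version (N : Subgroup (FreeGroup α)) [hN : N.Normal] (hfg : N.FG) :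
    N = ⊥ ∨ N.FiniteIndex := by
  by_cases hbot : N = ⊥
  · exact Or.inl hbot
  right
  obtain ⟨S, hS⟩ := hfg
  have hfinα : Finite α := letters_finite S hS hbot
  obtain ⟨⟨u0, hu0N⟩, hu0⟩ := (Subgroup.ne_bot_iff_exists_ne_one).mp hbot
  have hune : u0 ≠ 1 := by simpa [Subtype.ext_iff] using hu0
  rcases isEmpty_or_nonempty α with hα | hα
  · exfalso
    apply hbot
    have hall : ∀ g : FreeGroup α, g = 1 := by
      intro g
      rw [← FreeGroup.toWord_eq_nil_iff]
      cases h : g.toWord with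
      | nil => rfl
      | cons p t => exact (IsEmpty.false p.1).elim
    exact Subgroup.ext fun g => by simp [hall g, N.one_mem]
  · rcases subsingleton_or_nontrivial α with hsub | hnt
    · obtain ⟨a⟩ := hα
      exact finiteIndex_rank_one a (fun b => Subsingleton.elim b a) hu0N hune
    · exact finiteIndex_of_nontrivial S hS hbot

end FgNormalFree


/-- A finitely generated normal subgroup of a free group is trivial or of finite
index. -/
theorem fg_normal_subgroup_of_free_group_trivial_or_finite_index
    {F : Type*} [Group F] [IsFreeGroup F] (N : Subgroup F) [N.Normal]
    (hfg : N.FG) : N = ⊥ ∨ N.FiniteIndex := by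
  classical
  set e : F ≃* FreeGroup (IsFreeGroup.Generators F) := IsFreeGroup.toFreeGroup F with he
  set M : Subgroup (FreeGroup (IsFreeGroup.Generators F)) := N.map e.toMonoidHom with hM
  haveI : M.Normal := Subgroup.Normal.map ‹N.Normal› e.toMonoidHom e.surjective
  have hMfg : M.FG := by
    obtain ⟨S, hS⟩ := hfg
    exact ⟨S.image e, by
      have hc : (⇑e '' (S : Set F)) = (⇑e.toMonoidHom '' (S : Set F)) := rfl
      rw [Finset.coe_image, hc, ← MonoidHom.map_closure e.toMonoidHom, hS]⟩
  rcases FgNormalFree.free_version M hMfg with h | h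
  · left
    have := (Subgroup.map_eq_bot_iff_of_injective (H := N) (f := e.toMonoidHom)
      e.injective).mp h
    exact this
  · right
    constructor
    have : N = M.comap e.toMonoidHom := (Subgroup.comap_map_eq_self_of_injective e.injective N).symm
    rw [this, Subgroup.index_comap_of_surjective _ e.surjective]
    exact h.index_ne_zero
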